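/- Let L, L′ ⊆ ℝ^n be lines with positive slope such that L ∼_C̄ L′. Define σ : push_L(C̄) → push_{L′}(C̄) by σ(d) = push_{L′}(d̄), where d̄ is the greatest element of {c ∈ C̄ : c ≼ d} (nonempty since any c ∈ C̄ with push_L(c) = d satisfies c ≼ d). Then: (i) for every d ∈ push_L(C̄) and every c ∈ C̄ with push_L(c) = d, one has push_{L′}(c) = σ(d), so σ(d) = push_{L′}(push_L^{-1}(d)) is well defined; (ii) σ is a bijection from push_L(C̄) onto push_{L′}(C̄); and (iii) σ is order-preserving: if d, e ∈ push_L(C̄) with d ≼ e, then σ(d) ≼ σ(e). -/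

import Mathlib

/-- `L ⊆ ℝⁿ` is a line with positive slope: `L = {u₀ + t·m : t ∈ ℝ}` with all
coordinates of the velocity vector `m` positive. -/
def PosLine {n : ℕ} (L : Set (Fin n → ℝ)) : Prop :=
  ∃ u₀ m : Fin n → ℝ, (∀ i, 0 < m i) ∧ L = {x | ∃ t : ℝ, x = u₀ + t • m}

/-- For `∅ ≠ A ⊆ {1,…,n}`, the open face
`S_A(u) = {x : x_i = u_i for i ∈ A, x_j > u_j for j ∉ A}` of the boundary of
the positive cone of `u`. -/
def SFace {n : ℕ} (A : Finset (Fin n)) (u : Fin n → ℝ) : Set (Fin n → ℝ) :=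
  {x | (∀ i ∈ A, x i = u i) ∧ ∀ j ∉ A, u j < x j}

/-- Two points on a positive-slope line that agree in one coordinate are equal. -/
lemma posline_coord_eq {n : ℕ} {M : Set (Fin n → ℝ)} (hM : PosLine M)
    {x y : Fin n → ℝ} (hx : x ∈ M) (hy : y ∈ M) (i : Fin n) (h : x i = y i) :
    x = y := by
  obtain ⟨u₀, m, hm, rfl⟩ := hM
  obtain ⟨t, rfl⟩ := hx
  obtain ⟨s, rfl⟩ := hy
  simp only [Pi.add_apply, Pi.smul_apply, smul_eq_mul] at h
  have ht : t = s := by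
    have hmi := (hm i).ne'
    field_simp at h
    exact mul_right_cancel₀ hmi (by linarith)
  subst ht; rfl

/-- Key lemma: if `u ≤ v`, both with the same `P`-push, and the face data of
`P` and `P'` agree at `u` and `v`, then `P' u = P' v`. -/
lemma push_transfer {n : ℕ} (P P' : (Fin n → ℝ) → (Fin n → ℝ))
    (M' : Set (Fin n → ℝ)) (hM' : PosLine M')
    (hP' : ∀ w, IsLeast {x | x ∈ M' ∧ w ≤ x} (P' w))
    (B B' : (Fin n → ℝ) → Finset (Fin n))
    (hB : ∀ w, (B w).Nonempty ∧ P w ∈ SFace (B w) w)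
    (hB' : ∀ w, (B' w).Nonempty ∧ P' w ∈ SFace (B' w) w)
    (hP : ∀ w, w ≤ P w)
    {u v : Fin n → ℝ} (hu : B u = B' u) (hv : B v = B' v)
    (huv : u ≤ v) (hPeq : P u = P v) : P' u = P' v := by
  obtain ⟨i, hi⟩ := (hB u).1
  have hPui : P u i = u i := (hB u).2.1 i hi
  have hvi : v i = u i := by
    have h1 : u i ≤ v i := huv i
    have h2 : v i ≤ P v i := hP v i
    rw [← hPeq, hPui] at h2
    linarith
  have hiv : i ∈ B v := by
    by_contra hc
    have := (hB v).2.2 i hc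
    rw [← hPeq, hPui, hvi] at this
    exact lt_irrefl _ this
  have h1 : P' u i = u i := (hB' u).2.1 i (hu ▸ hi)
  have h2 : P' v i = v i := (hB' v).2.1 i (hv ▸ hiv)
  exact posline_coord_eq hM' (hP' u).1.1 (hP' v).1.1 i (by rw [h1, h2, hvi])

theorem stmt_14 {n : ℕ} (hn : 0 < n) (L L' : Set (Fin n → ℝ))
    (hL : PosLine L) (hL' : PosLine L')
    (Cbar : Finset (Fin n → ℝ)) (hCne : Cbar.Nonempty)
    (hclosed : ∀ a ∈ Cbar, ∀ b ∈ Cbar, a ⊔ b ∈ Cbar)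
    (pushL pushL' : (Fin n → ℝ) → (Fin n → ℝ))
    (hpush : ∀ w : Fin n → ℝ, IsLeast {x | x ∈ L ∧ w ≤ x} (pushL w))
    (hpush' : ∀ w : Fin n → ℝ, IsLeast {x | x ∈ L' ∧ w ≤ x} (pushL' w))
    (AL AL' : (Fin n → ℝ) → Finset (Fin n))
    (hAL : ∀ w : Fin n → ℝ, (AL w).Nonempty ∧ pushL w ∈ SFace (AL w) w)
    (hAL' : ∀ w : Fin n → ℝ, (AL' w).Nonempty ∧ pushL' w ∈ SFace (AL' w) w)
    (hequiv : ∀ c ∈ Cbar, AL c = AL' c)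
    (bar : (Fin n → ℝ) → (Fin n → ℝ))
    (hbar : ∀ d ∈ pushL '' (↑Cbar : Set (Fin n → ℝ)),
      IsGreatest {c | c ∈ Cbar ∧ c ≤ d} (bar d)) :
    (∀ c ∈ Cbar, pushL' c = pushL' (bar (pushL c))) ∧
    Set.BijOn (fun d => pushL' (bar d)) (pushL '' (↑Cbar : Set (Fin n → ℝ)))
      (pushL' '' (↑Cbar : Set (Fin n → ℝ))) ∧
    (∀ d ∈ pushL '' (↑Cbar : Set (Fin n → ℝ)),
      ∀ e ∈ pushL '' (↑Cbar : Set (Fin n → ℝ)),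
        d ≤ e → pushL' (bar d) ≤ pushL' (bar e)) := by
  have hle : ∀ w, w ≤ pushL w := fun w => (hpush w).1.2
  have hle' : ∀ w, w ≤ pushL' w := fun w => (hpush' w).1.2
  have monoL : ∀ w w', w ≤ w' → pushL w ≤ pushL w' := fun w w' h =>
    (hpush w).2 ⟨(hpush w').1.1, le_trans h (hpush w').1.2⟩
  have monoL' : ∀ w w', w ≤ w' → pushL' w ≤ pushL' w' := fun w w' h =>
    (hpush' w).2 ⟨(hpush' w').1.1, le_trans h (hpush' w').1.2⟩
  -- bar d ∈ Cbar, bar d ≤ d, and pushL (bar d) = d, for d in the image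
  have hbarC : ∀ d ∈ pushL '' (↑Cbar : Set (Fin n → ℝ)), bar d ∈ Cbar ∧ bar d ≤ d :=
    fun d hd => (hbar d hd).1
  have hpushbar : ∀ d ∈ pushL '' (↑Cbar : Set (Fin n → ℝ)), pushL (bar d) = d := by
    rintro d ⟨c, hc, rfl⟩
    have hcd : c ≤ bar (pushL c) := (hbar _ ⟨c, hc, rfl⟩).2 ⟨hc, hle c⟩
    have h1 : pushL c ≤ pushL (bar (pushL c)) := monoL _ _ hcd
    have h2 : pushL (bar (pushL c)) ≤ pushL c :=
      (hpush _).2 ⟨(hpush c).1.1, (hbarC _ ⟨c, hc, rfl⟩).2⟩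
    exact le_antisymm h2 h1
  -- Part (i)
  have part1 : ∀ c ∈ Cbar, pushL' c = pushL' (bar (pushL c)) := by
    intro c hc
    have hmem : pushL c ∈ pushL '' (↑Cbar : Set (Fin n → ℝ)) := ⟨c, hc, rfl⟩
    have hcd : c ≤ bar (pushL c) := (hbar _ hmem).2 ⟨hc, hle c⟩
    exact push_transfer pushL pushL' L' hL' hpush' AL AL' hAL hAL' hle
      (hequiv c hc) (hequiv _ (hbarC _ hmem).1) hcd (hpushbar _ hmem).symm
  -- symmetric transfer (from L' back to L)
  have transfer' : ∀ u ∈ Cbar, ∀ v ∈ Cbar, u ≤ v → pushL' u = pushL' v →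
      pushL u = pushL v := fun u hu v hv huv h =>
    push_transfer pushL' pushL L hL hpush AL' AL hAL' hAL hle'
      (hequiv u hu).symm (hequiv v hv).symm huv h
  refine ⟨part1, ⟨?_, ?_, ?_⟩, ?_⟩
  · -- MapsTo
    rintro d hd
    exact ⟨bar d, (hbarC d hd).1, rfl⟩
  · -- InjOn
    intro d hd e he hσ
    simp only at hσ
    set w := bar d ⊔ bar e with hw
    have hwC : w ∈ Cbar := hclosed _ (hbarC d hd).1 _ (hbarC e he).1
    have hwle : w ≤ pushL' (bar d) :=
      sup_le (hle' (bar d)) (hσ ▸ hle' (bar e))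
    have h1 : pushL' w = pushL' (bar d) :=
      le_antisymm ((hpush' w).2 ⟨(hpush' (bar d)).1.1, hwle⟩)
        (monoL' _ _ le_sup_left)
    have h2 : pushL' w = pushL' (bar e) := h1.trans hσ
    have e1 : pushL (bar d) = pushL w :=
      transfer' _ (hbarC d hd).1 _ hwC le_sup_left h1.symm
    have e2 : pushL (bar e) = pushL w :=
      transfer' _ (hbarC e he).1 _ hwC le_sup_right h2.symm
    rw [← hpushbar d hd, ← hpushbar e he, e1, e2]
  · -- SurjOn
    rintro e ⟨c, hc, rfl⟩
    exact ⟨pushL c, ⟨c, hc, rfl⟩, (part1 c hc).symm⟩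
  · -- order preserving
    intro d hd e he hde
    have hbd : bar d ≤ bar e := (hbar e he).2 ⟨(hbarC d hd).1, le_trans (hbarC d hd).2 hde⟩
    exact monoL' _ _ hbd
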